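/- For s ∈ (0,1] and t, w ≥ 0, the product identity g((1-s)/s, tanh t)·g((1-s)/s, tanh w) = (( (cosh(s(t+w)) + cosh(s(t-w)) )/2 )^(1/s)) / (cosh(t)·cosh(w)) holds, where g(ρ, z) = ((1/2)(1+z)^(1/(1+ρ)) + (1/2)(1-z)^(1/(1+ρ)))^(1+ρ). -/

import Mathlib

open Real

noncomputable def g (ρ z : ℝ) : ℝ :=
  ((1/2) * (1 + z) ^ (1/(1+ρ)) + (1/2) * (1 - z) ^ (1/(1+ρ))) ^ (1+ρ)

lemma g_tanh_eq (s : ℝ) (hs0 : 0 < s) (x : ℝ) :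
    g ((1 - s)/s) (Real.tanh x) = Real.cosh (s * x) ^ (1/s) / Real.cosh x := by
  have hsne : s ≠ 0 := ne_of_gt hs0
  have h1 : 1 + (1 - s)/s = 1/s := by field_simp; ring
  have h2 : 1/(1/s) = s := one_div_one_div s
  have hcosh : 0 < Real.cosh x := Real.cosh_pos x
  have hplus : 1 + Real.tanh x = Real.exp x / Real.cosh x := by
    rw [Real.tanh_eq_sinh_div_cosh]
    field_simp
    exact Real.cosh_add_sinh x
  have hminus : 1 - Real.tanh x = Real.exp (-x) / Real.cosh x := by
    rw [Real.tanh_eq_sinh_div_cosh]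
    field_simp
    exact Real.cosh_sub_sinh x
  unfold g
  rw [h1, h2, hplus, hminus]
  have he1 : (Real.exp x / Real.cosh x) ^ s = Real.exp (s * x) / Real.cosh x ^ s := by
    rw [Real.div_rpow (Real.exp_nonneg x) hcosh.le, ← Real.exp_mul, mul_comm]
  have he2 : (Real.exp (-x) / Real.cosh x) ^ s = Real.exp (s * (-x)) / Real.cosh x ^ s := by
    rw [Real.div_rpow (Real.exp_nonneg _) hcosh.le, ← Real.exp_mul, mul_comm]
  rw [he1, he2]
  have hsum : (1/2) * (Real.exp (s * x) / Real.cosh x ^ s)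
      + (1/2) * (Real.exp (s * (-x)) / Real.cosh x ^ s)
      = Real.cosh (s * x) / Real.cosh x ^ s := by
    have : s * -x = -(s * x) := by ring
    rw [this]
    conv_rhs => rw [Real.cosh_eq]
    ring
  rw [hsum]
  have hcs : (0:ℝ) < Real.cosh x ^ s := Real.rpow_pos_of_pos hcosh s
  rw [Real.div_rpow (Real.cosh_pos _).le hcs.le]
  rw [← Real.rpow_mul hcosh.le, mul_one_div, div_self hsne, Real.rpow_one]

theorem g_product_identity (s : ℝ) (hs : s ∈ Set.Ioc (0:ℝ) 1) (t w : ℝ)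
    (ht : 0 ≤ t) (hw : 0 ≤ w) :
    g ((1 - s)/s) (Real.tanh t) * g ((1 - s)/s) (Real.tanh w) =
      ((Real.cosh (s * (t + w)) + Real.cosh (s * (t - w)))/2) ^ (1/s) /
        (Real.cosh t * Real.cosh w) := by
  obtain ⟨hs0, _⟩ := hs
  rw [g_tanh_eq s hs0 t, g_tanh_eq s hs0 w]
  have key : (Real.cosh (s * (t + w)) + Real.cosh (s * (t - w)))/2
      = Real.cosh (s * t) * Real.cosh (s * w) := by
    rw [mul_add, mul_sub, Real.cosh_add, Real.cosh_sub]
    ring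
  rw [key, Real.mul_rpow (Real.cosh_pos _).le (Real.cosh_pos _).le]
  field_simp
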